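/- Suppose the generalized eigenvalues of (Aψ, Au) = ρ(ψ, u)_W satisfy ρₖ ≤ C₀k^{-α} with α > 1, and the noise e has independent zero-mean components with variance ≤ σ². Let x_λ minimize ‖Ax − b‖² + λ‖x‖_W² where b = Ax* + e. Then there is a constant C, independent of n, λ, σ, such that 𝔼[(1/n)‖Ax_λ − Ax*‖²] ≤ Cλ(1/n)‖x*‖_W² + Cσ²/(nλ^{1/α}). -/

import Mathlib

open Matrix MeasureTheory ProbabilityTheory Set
open Matrix MeasureTheory ProbabilityTheory Set

private lemma lin_zero {a c : ℝ} (hc : 0 ≤ c) (h : ∀ t : ℝ, 0 ≤ a*t + c*t^2) : a = 0 := by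
  by_contra ha
  have h1 := h (-a/(2*(c+1)))
  have hc1 : (0:ℝ) < c + 1 := by linarith
  have ha2 : 0 < a^2 := by positivity
  have h2 : a * (-a / (2 * (c + 1))) + c * (-a / (2 * (c + 1))) ^ 2
      = (a^2 / (4*(c+1)^2)) * (-c - 2) := by field_simp; ring
  rw [h2] at h1
  nlinarith [div_pos ha2 (by positivity : (0:ℝ) < 4*(c+1)^2)]

private lemma symm_dot {n : ℕ} {M : Matrix (Fin n) (Fin n) ℝ} (hM : Mᵀ = M)
    (u v : Fin n → ℝ) : u ⬝ᵥ M.mulVec v = v ⬝ᵥ M.mulVec u := by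
  rw [Matrix.dotProduct_mulVec, ← Matrix.mulVec_transpose, hM, dotProduct_comm]

private lemma rpow_anti {α : ℝ} (hα : 0 < α) {x y : ℝ} (hx : 0 < x) (hxy : x ≤ y) :
    y ^ (-α) ≤ x ^ (-α) := by
  rw [Real.rpow_neg hx.le, Real.rpow_neg (by linarith)]
  exact inv_anti₀ (Real.rpow_pos_of_pos hx α) (Real.rpow_le_rpow hx.le hxy hα.le)

private lemma tail_sum {α : ℝ} (hα : 1 < α) (K n : ℕ) (hK : 1 ≤ K) :
    ∑ k ∈ Finset.Ico K n, ((k:ℝ)+1) ^ (-α) ≤ (K:ℝ) ^ (1-α) / (α-1) := by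
  have hα0 : 0 < α := by linarith
  have hKpos : (0:ℝ) < K := by exact_mod_cast hK
  rcases le_or_gt n K with h | h
  · rw [Finset.Ico_eq_empty (by omega)]
    simp only [Finset.sum_empty]
    exact div_nonneg (Real.rpow_nonneg hKpos.le _) (by linarith)
  have hKn : K ≤ n := le_of_lt h
  have hanti : AntitoneOn (fun x : ℝ => x ^ (-α)) (Icc (K:ℝ) n) := by
    intro x hx y hy hxy
    exact rpow_anti hα0 (lt_of_lt_of_le hKpos hx.1) hxy
  have h1 : ∑ i ∈ Finset.Ico K n, (fun x : ℝ => x ^ (-α)) ((i:ℕ)+1 : ℕ)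
      ≤ ∫ x in (K:ℝ)..(n:ℝ), x ^ (-α) := AntitoneOn.sum_le_integral_Ico hKn hanti
  have hcast : ∀ i : ℕ, (fun x : ℝ => x ^ (-α)) ((i:ℕ)+1 : ℕ) = ((i:ℝ)+1) ^ (-α) := by
    intro i; push_cast; ring_nf
  rw [Finset.sum_congr rfl (fun i _ => (hcast i).symm)]
  refine le_trans h1 ?_
  have hint : IntegrableOn (fun x : ℝ => x ^ (-α)) (Ioi (K:ℝ)) volume :=
    integrableOn_Ioi_rpow_of_lt (by linarith) hKpos
  have h2 : (∫ x in (K:ℝ)..(n:ℝ), x ^ (-α)) = ∫ x in Ioc (K:ℝ) n, x ^ (-α) := by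
    rw [intervalIntegral.integral_of_le (by exact_mod_cast hKn)]
  rw [h2]
  have h3 : (∫ x in Ioc (K:ℝ) n, x ^ (-α)) ≤ ∫ x in Ioi (K:ℝ), x ^ (-α) := by
    apply setIntegral_mono_set hint
    · filter_upwards [self_mem_ae_restrict measurableSet_Ioi] with x hx
      exact Real.rpow_nonneg (by exact le_of_lt (lt_trans hKpos hx)) _
    · exact Filter.Eventually.of_forall (fun x hx => hx.1)
  refine le_trans h3 ?_
  rw [integral_Ioi_rpow_of_lt (by linarith) hKpos]
  rw [show (-α+1 : ℝ) = -(α-1) by ring, div_neg, neg_div, neg_neg,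
    show -(α-1) = 1-α by ring]

private lemma sum_min_le {C₀ α : ℝ} (hC₀ : 0 < C₀) (hα : 1 < α) (n : ℕ) {lam : ℝ}
    (hlam : 0 < lam) :
    ∑ k ∈ Finset.range n, min 1 (C₀ * ((k:ℝ)+1)^(-α) / lam)
      ≤ (C₀ ^ (1/α) * (2 + 1/(α-1))) * lam ^ (-(1/α)) := by
  have hα0 : (0:ℝ) < α := by linarith
  have hα1 : (0:ℝ) < α - 1 := by linarith
  set T : ℝ := (C₀/lam) ^ (1/α) with hTdef
  have hT0 : 0 < T := Real.rpow_pos_of_pos (div_pos hC₀ hlam) _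
  have hTα : T ^ α = C₀ / lam := by
    rw [hTdef, ← Real.rpow_mul (div_pos hC₀ hlam).le, one_div,
      inv_mul_cancel₀ (ne_of_gt hα0), Real.rpow_one]
  have hTval : T = C₀ ^ (1/α) * lam ^ (-(1/α)) := by
    rw [hTdef, Real.div_rpow hC₀.le hlam.le, div_eq_mul_inv, ← Real.rpow_neg hlam.le]
  have hterm : ∀ k : ℕ, C₀ * ((k:ℝ)+1)^(-α) / lam = T^α * ((k:ℝ)+1)^(-α) := by
    intro k; rw [hTα]; ring
  have key : ∑ k ∈ Finset.range n, min 1 (C₀ * ((k:ℝ)+1)^(-α) / lam) ≤ (2 + 1/(α-1)) * T := by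
    rcases lt_or_ge T 1 with hT1 | hT1
    · have h1 : ∑ k ∈ Finset.range n, min 1 (C₀ * ((k:ℝ)+1)^(-α) / lam)
          ≤ ∑ k ∈ Finset.range n, T^α * ((k:ℝ)+1)^(-α) := by
        apply Finset.sum_le_sum; intro k _
        rw [← hterm k]; exact min_le_right _ _
      rw [← Finset.mul_sum] at h1
      have h2 : ∑ k ∈ Finset.range n, ((k:ℝ)+1)^(-α) ≤ 1 + 1/(α-1) := by
        rcases Nat.eq_zero_or_pos n with rfl | hn
        · simp; positivity
        · rw [Finset.range_eq_Ico, ← Finset.sum_Ico_consecutive _ (Nat.zero_le 1) hn]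
          have e0 : ∑ k ∈ Finset.Ico (0:ℕ) 1, ((k:ℝ)+1)^(-α) = 1 := by
            norm_num
          rw [e0]
          have := tail_sum hα 1 n (le_refl 1)
          simp only [Nat.cast_one, Real.one_rpow] at this
          linarith
      have hTT : T ^ α ≤ T := by
        calc T ^ α ≤ T ^ (1:ℝ) :=
          Real.rpow_le_rpow_of_exponent_ge hT0 hT1.le (by linarith)
        _ = T := Real.rpow_one T
      calc ∑ k ∈ Finset.range n, min 1 (C₀ * ((k:ℝ)+1)^(-α) / lam)
          ≤ T^α * (1 + 1/(α-1)) := le_trans h1 (by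
            apply mul_le_mul_of_nonneg_left h2 (Real.rpow_pos_of_pos hT0 α).le)
        _ ≤ T * (1 + 1/(α-1)) := by
            apply mul_le_mul_of_nonneg_right hTT; positivity
        _ ≤ (2 + 1/(α-1)) * T := by nlinarith
    · set K : ℕ := ⌈T⌉₊ with hKdef
      have hK1 : 1 ≤ K := Nat.one_le_ceil_iff.mpr hT0
      have hTK : T ≤ (K:ℝ) := Nat.le_ceil T
      have hK2T : (K:ℝ) ≤ 2*T := by
        have := Nat.ceil_lt_add_one hT0.le
        linarith
      rcases le_or_gt n K with hn | hn
      · have h1 : ∑ k ∈ Finset.range n, min 1 (C₀ * ((k:ℝ)+1)^(-α) / lam)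
            ≤ ∑ k ∈ Finset.range n, (1:ℝ) :=
          Finset.sum_le_sum (fun k _ => min_le_left _ _)
        simp only [Finset.sum_const, Finset.card_range, nsmul_eq_mul, mul_one] at h1
        have : (n:ℝ) ≤ 2*T := le_trans (by exact_mod_cast hn) hK2T
        have hfrac : 0 ≤ 1/(α-1) * T := by positivity
        linarith
      · rw [Finset.range_eq_Ico, ← Finset.sum_Ico_consecutive _ (Nat.zero_le K) hn.le]
        have h1 : ∑ k ∈ Finset.Ico 0 K, min 1 (C₀ * ((k:ℝ)+1)^(-α) / lam) ≤ (K:ℝ) := by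
          calc ∑ k ∈ Finset.Ico 0 K, min 1 (C₀ * ((k:ℝ)+1)^(-α) / lam)
              ≤ ∑ k ∈ Finset.Ico 0 K, (1:ℝ) :=
                Finset.sum_le_sum (fun k _ => min_le_left _ _)
            _ = (K:ℝ) := by simp
        have h2 : ∑ k ∈ Finset.Ico K n, min 1 (C₀ * ((k:ℝ)+1)^(-α) / lam)
            ≤ T / (α-1) := by
          have h3 : ∑ k ∈ Finset.Ico K n, min 1 (C₀ * ((k:ℝ)+1)^(-α) / lam)
              ≤ ∑ k ∈ Finset.Ico K n, T^α * ((k:ℝ)+1)^(-α) := by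
            apply Finset.sum_le_sum; intro k _
            rw [← hterm k]; exact min_le_right _ _
          rw [← Finset.mul_sum] at h3
          have h4 := tail_sum hα K n hK1
          have h5 : (K:ℝ)^(1-α) ≤ T^(1-α) := by
            rw [show (1-α : ℝ) = -(α-1) by ring]
            exact rpow_anti hα1 hT0 hTK
          have h6 : T^α * T^(1-α) = T := by
            rw [← Real.rpow_add hT0]; norm_num
          calc ∑ k ∈ Finset.Ico K n, min 1 (C₀ * ((k:ℝ)+1)^(-α) / lam)
              ≤ T^α * ((K:ℝ)^(1-α)/(α-1)) := le_trans h3 (by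
                apply mul_le_mul_of_nonneg_left h4 (Real.rpow_pos_of_pos hT0 α).le)
            _ ≤ T^α * (T^(1-α)/(α-1)) := by
                apply mul_le_mul_of_nonneg_left _ (Real.rpow_pos_of_pos hT0 α).le
                gcongr
            _ = T / (α-1) := by rw [mul_div_assoc'] at *; rw [h6]
        have : T/(α-1) = 1/(α-1)*T := by ring
        linarith
  calc ∑ k ∈ Finset.range n, min 1 (C₀ * ((k:ℝ)+1)^(-α) / lam)
      ≤ (2 + 1/(α-1)) * T := key
    _ = (C₀ ^ (1/α) * (2 + 1/(α-1))) * lam ^ (-(1/α)) := by rw [hTval]; ring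

private lemma noise_var {Ω : Type} [MeasureSpace Ω] [IsProbabilityMeasure (ℙ : Measure Ω)]
    {n : ℕ} {e : Fin n → Ω → ℝ} {σ : ℝ}
    (hindep : iIndepFun e ℙ)
    (hL2 : ∀ i, MemLp (e i) 2 ℙ)
    (hmean : ∀ i, ∫ ω, e i ω ∂ℙ = 0)
    (hvar : ∀ i, ∫ ω, (e i ω)^2 ∂ℙ ≤ σ^2) (g : Fin n → ℝ) :
    ∫ ω, (∑ i, g i * e i ω)^2 ∂ℙ ≤ σ^2 * ∑ i, (g i)^2 := by
  have hXint : ∀ i : Fin n, Integrable (fun ω => g i * e i ω) ℙ :=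
    fun i => ((hL2 i).integrable one_le_two).const_mul (g i)
  have hint : ∀ i j : Fin n, Integrable (fun ω => (g i * e i ω) * (g j * e j ω)) ℙ := by
    intro i j
    rcases eq_or_ne i j with rfl | hij
    · simpa [pow_two] using ((hL2 i).const_mul (g i)).integrable_sq
    · have hIJ : IndepFun (fun ω => g i * e i ω) (fun ω => g j * e j ω) ℙ :=
        (hindep.indepFun hij).comp (measurable_const_mul (g i)) (measurable_const_mul (g j))
      exact hIJ.integrable_mul (hXint i) (hXint j)
  calc ∫ ω, (∑ i, g i * e i ω)^2 ∂ℙ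
      = ∫ ω, ∑ i, ∑ j, (g i * e i ω) * (g j * e j ω) ∂ℙ := by
        congr 1; funext ω; rw [sq, Finset.sum_mul_sum]
    _ = ∑ i, ∑ j, ∫ ω, (g i * e i ω) * (g j * e j ω) ∂ℙ := by
        rw [integral_finset_sum _ (fun i _ => integrable_finset_sum _ (fun j _ => hint i j))]
        exact Finset.sum_congr rfl fun i _ => integral_finset_sum _ (fun j _ => hint i j)
    _ = ∑ i, ∫ ω, (g i * e i ω) * (g i * e i ω) ∂ℙ := by
        apply Finset.sum_congr rfl; intro i _
        rw [Finset.sum_eq_single i]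
        · intro j _ hij
          have hIJ : IndepFun (fun ω => g i * e i ω) (fun ω => g j * e j ω) ℙ :=
            (hindep.indepFun (Ne.symm hij)).comp (measurable_const_mul (g i))
              (measurable_const_mul (g j))
          have h := hIJ.integral_mul_eq_mul_integral (hXint i).1 (hXint j).1
          calc ∫ ω, g i * e i ω * (g j * e j ω) ∂ℙ
              = integral ℙ ((fun ω => g i * e i ω) * fun ω => g j * e j ω) := rfl
            _ = (∫ ω, g i * e i ω ∂ℙ) * ∫ ω, g j * e j ω ∂ℙ := h
            _ = 0 := by simp [integral_const_mul, hmean]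
        · intro h; exact absurd (Finset.mem_univ i) h
    _ ≤ ∑ i, (g i)^2 * σ^2 := by
        apply Finset.sum_le_sum; intro i _
        have h : ∫ ω, (g i * e i ω) * (g i * e i ω) ∂ℙ = (g i)^2 * ∫ ω, (e i ω)^2 ∂ℙ := by
          rw [← integral_const_mul]
          congr 1; funext ω; ring
        rw [h]
        exact mul_le_mul_of_nonneg_left (hvar i) (sq_nonneg _)
    _ = σ^2 * ∑ i, (g i)^2 := by rw [Finset.mul_sum]; exact Finset.sum_congr rfl fun i _ => by ring

set_option maxHeartbeats 2000000 in
/-- Expectation bound for the output error of Tikhonov regularization under polynomial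
eigenvalue decay and independent zero-mean bounded-variance noise:
`𝔼[(1/n)‖Ax_λ − Ax*‖²] ≤ Cλ(1/n)‖x*‖_W² + Cσ²/(nλ^{1/α})`, with `C` independent of
`n`, `λ`, `σ`. -/
theorem stmt7 (C₀ α : ℝ) (hC₀ : 0 < C₀) (hα : 1 < α) :
    ∃ C > (0 : ℝ),
      ∀ (Ω : Type) (_ : MeasureSpace Ω), IsProbabilityMeasure (ℙ : Measure Ω) →
      ∀ (n : ℕ), 0 < n →
      ∀ (A W : Matrix (Fin n) (Fin n) ℝ), W.PosDef →
      ∀ (ρ : Fin n → ℝ) (ψ : Fin n → (Fin n → ℝ)),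
        (∀ k, 0 ≤ ρ k) →
        (∀ k, (Aᵀ * A).mulVec (ψ k) = ρ k • W.mulVec (ψ k)) →
        (∀ i j, ψ i ⬝ᵥ W.mulVec (ψ j) = if i = j then 1 else 0) →
        (∀ v : Fin n → ℝ, v = ∑ k, (ψ k ⬝ᵥ W.mulVec v) • ψ k) →
        (∀ k : Fin n, ρ k ≤ C₀ * ((k : ℝ) + 1) ^ (-α)) →
      ∀ (e : Fin n → Ω → ℝ) (σ : ℝ), 0 ≤ σ →
        iIndepFun e ℙ →
        (∀ i, MemLp (e i) 2 ℙ) →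
        (∀ i, ∫ ω, e i ω ∂ℙ = 0) →
        (∀ i, ∫ ω, (e i ω) ^ 2 ∂ℙ ≤ σ ^ 2) →
      ∀ (lam : ℝ), 0 < lam →
      ∀ (xstar : Fin n → ℝ) (xlam : Ω → Fin n → ℝ),
        (∀ ω, ∀ x : Fin n → ℝ,
          (A.mulVec (xlam ω) - (A.mulVec xstar + fun i => e i ω)) ⬝ᵥ
              (A.mulVec (xlam ω) - (A.mulVec xstar + fun i => e i ω)) +
            lam * (xlam ω ⬝ᵥ W.mulVec (xlam ω)) ≤
          (A.mulVec x - (A.mulVec xstar + fun i => e i ω)) ⬝ᵥ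
              (A.mulVec x - (A.mulVec xstar + fun i => e i ω)) +
            lam * (x ⬝ᵥ W.mulVec x)) →
        ∫ ω, (1 / (n : ℝ)) *
            ((A.mulVec (xlam ω) - A.mulVec xstar) ⬝ᵥ (A.mulVec (xlam ω) - A.mulVec xstar)) ∂ℙ ≤
          C * lam * ((1 / (n : ℝ)) * (xstar ⬝ᵥ W.mulVec xstar)) +
          C * σ ^ 2 / ((n : ℝ) * lam ^ (1 / α)) := by
  have hα0 : (0:ℝ) < α := by linarith
  set C₁ : ℝ := C₀ ^ (1/α) * (2 + 1/(α-1)) with hC₁def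
  have hC₁0 : 0 < C₁ := by
    have h1 : (0:ℝ) < 1/(α-1) := by
      apply div_pos one_pos; linarith
    have h2 : (0:ℝ) < C₀ ^ (1/α) := Real.rpow_pos_of_pos hC₀ _
    positivity
  clear_value C₁
  refine ⟨max 1 C₁, lt_of_lt_of_le one_pos (le_max_left _ _), ?_⟩
  set CC : ℝ := max 1 C₁ with hCCdef
  have hCC1 : (1:ℝ) ≤ CC := le_max_left _ _
  have hCCC₁ : C₁ ≤ CC := le_max_right _ _
  clear_value CC
  intro Ω _inst hprob n hn A W hW ρ ψ hρ0 heig horth hcomp hdecay e σ hσ hindep hL2 hmean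
    hvar lam hlam xstar xlam hmin
  -- matrix symmetry facts
  have hWt : Wᵀ = W := by
    rw [← Matrix.conjTranspose_eq_transpose_of_trivial]; exact hW.1
  have hMt : (Aᵀ*A)ᵀ = Aᵀ*A := by rw [Matrix.transpose_mul, Matrix.transpose_transpose]
  have hdotAA : ∀ v w : Fin n → ℝ,
      v ⬝ᵥ (Aᵀ*A).mulVec w = (A.mulVec v) ⬝ᵥ (A.mulVec w) := by
    intro v w
    rw [← Matrix.mulVec_mulVec, Matrix.dotProduct_mulVec, Matrix.vecMul_transpose]
  have heigdot : ∀ (k : Fin n) (v : Fin n → ℝ),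
      ψ k ⬝ᵥ (Aᵀ*A).mulVec v = ρ k * (ψ k ⬝ᵥ W.mulVec v) := by
    intro k v
    rw [symm_dot hMt, heig k, dotProduct_smul, smul_eq_mul, symm_dot hWt]
  have hAρ : ∀ k, (A.mulVec (ψ k)) ⬝ᵥ (A.mulVec (ψ k)) = ρ k := by
    intro k; rw [← hdotAA, heigdot, horth]; simp
  -- positivity of ρ k + lam
  have hρlam : ∀ k : Fin n, 0 < ρ k + lam := fun k => by have := hρ0 k; linarith
  -- normal equations
  have hnormal : ∀ (ω : Ω) (k : Fin n),
      ρ k * (ψ k ⬝ᵥ W.mulVec (xlam ω)) + lam * (ψ k ⬝ᵥ W.mulVec (xlam ω)) =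
        ρ k * (ψ k ⬝ᵥ W.mulVec xstar) + (A.mulVec (ψ k)) ⬝ᵥ (fun i => e i ω) := by
    intro ω k
    have hq : ∀ t : ℝ,
        0 ≤ (2*((A.mulVec (ψ k)) ⬝ᵥ (A.mulVec (xlam ω) - (A.mulVec xstar + fun i => e i ω)))
              + 2*lam*(ψ k ⬝ᵥ W.mulVec (xlam ω))) * t
            + ((A.mulVec (ψ k) ⬝ᵥ A.mulVec (ψ k)) + lam * (ψ k ⬝ᵥ W.mulVec (ψ k))) * t^2 := by
      intro t
      have hm := hmin ω (xlam ω + t • ψ k)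
      have h1 : (A.mulVec xstar) ⬝ᵥ (A.mulVec (ψ k))
          = (A.mulVec (ψ k)) ⬝ᵥ (A.mulVec xstar) := dotProduct_comm _ _
      have h2 : (fun i => e i ω) ⬝ᵥ (A.mulVec (ψ k))
          = (A.mulVec (ψ k)) ⬝ᵥ (fun i => e i ω) := dotProduct_comm _ _
      have h4 : (A.mulVec (xlam ω)) ⬝ᵥ (A.mulVec (ψ k))
          = (A.mulVec (ψ k)) ⬝ᵥ (A.mulVec (xlam ω)) := dotProduct_comm _ _
      have h3 : xlam ω ⬝ᵥ W.mulVec (ψ k) = ψ k ⬝ᵥ W.mulVec (xlam ω) := symm_dot hWt _ _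
      have hexp : (A.mulVec (xlam ω + t • ψ k) - (A.mulVec xstar + fun i => e i ω)) ⬝ᵥ
              (A.mulVec (xlam ω + t • ψ k) - (A.mulVec xstar + fun i => e i ω)) +
            lam * ((xlam ω + t • ψ k) ⬝ᵥ W.mulVec (xlam ω + t • ψ k))
          = ((A.mulVec (xlam ω) - (A.mulVec xstar + fun i => e i ω)) ⬝ᵥ
              (A.mulVec (xlam ω) - (A.mulVec xstar + fun i => e i ω)) +
            lam * (xlam ω ⬝ᵥ W.mulVec (xlam ω)))
            + (2*((A.mulVec (ψ k)) ⬝ᵥ (A.mulVec (xlam ω) - (A.mulVec xstar + fun i => e i ω)))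
              + 2*lam*(ψ k ⬝ᵥ W.mulVec (xlam ω))) * t
            + ((A.mulVec (ψ k) ⬝ᵥ A.mulVec (ψ k)) + lam * (ψ k ⬝ᵥ W.mulVec (ψ k))) * t^2 := by
        simp only [Matrix.mulVec_add, Matrix.mulVec_smul, dotProduct_add, add_dotProduct,
          dotProduct_smul, smul_dotProduct, sub_dotProduct, dotProduct_sub, smul_eq_mul]
        rw [h1, h2, h3, h4]
        ring
      rw [hexp] at hm
      linarith
    have hcc : 0 ≤ (A.mulVec (ψ k) ⬝ᵥ A.mulVec (ψ k)) + lam * (ψ k ⬝ᵥ W.mulVec (ψ k)) := by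
      rw [hAρ k, horth k k]
      simp only [if_true, eq_self_iff_true, mul_one]
      have := hρ0 k; linarith
    have ha := lin_zero hcc hq
    have e1 : (A.mulVec (ψ k)) ⬝ᵥ (A.mulVec (xlam ω))
        = ρ k * (ψ k ⬝ᵥ W.mulVec (xlam ω)) := by rw [← hdotAA, heigdot]
    have e2 : (A.mulVec (ψ k)) ⬝ᵥ (A.mulVec xstar)
        = ρ k * (ψ k ⬝ᵥ W.mulVec xstar) := by rw [← hdotAA, heigdot]
    rw [dotProduct_sub, dotProduct_add, e1, e2] at ha
    linarith
  -- coefficient formula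
  have hd : ∀ (ω : Ω) (k : Fin n),
      ψ k ⬝ᵥ W.mulVec (xlam ω) - ψ k ⬝ᵥ W.mulVec xstar
        = ((A.mulVec (ψ k)) ⬝ᵥ (fun i => e i ω) - lam * (ψ k ⬝ᵥ W.mulVec xstar)) / (ρ k + lam) := by
    intro ω k
    have h := hnormal ω k
    have hpos := hρlam k
    field_simp
    linarith
  -- sum expansion helpers
  have hmulVec_sum : ∀ (M : Matrix (Fin n) (Fin n) ℝ) (w : Fin n → Fin n → ℝ),
      M.mulVec (∑ k, w k) = ∑ k, M.mulVec (w k) := by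
    intro M w
    simpa only [Matrix.mulVecLin_apply] using map_sum (Matrix.mulVecLin M) w Finset.univ
  have hdot_sum : ∀ (v : Fin n → ℝ) (w : Fin n → Fin n → ℝ),
      v ⬝ᵥ (∑ k, w k) = ∑ k, v ⬝ᵥ w k := by
    intro v w
    simp only [dotProduct, Finset.sum_apply, Finset.mul_sum]
    exact Finset.sum_comm
  -- pointwise spectral identity
  have hpoint : ∀ ω : Ω,
      (A.mulVec (xlam ω) - A.mulVec xstar) ⬝ᵥ (A.mulVec (xlam ω) - A.mulVec xstar)
        = ∑ k, ρ k * (ψ k ⬝ᵥ W.mulVec (xlam ω) - ψ k ⬝ᵥ W.mulVec xstar)^2 := by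
    intro ω
    have h0 : A.mulVec (xlam ω) - A.mulVec xstar = A.mulVec (xlam ω - xstar) := by
      rw [Matrix.mulVec_sub]
    have hcoef : ∀ k, ψ k ⬝ᵥ W.mulVec (xlam ω - xstar)
        = ψ k ⬝ᵥ W.mulVec (xlam ω) - ψ k ⬝ᵥ W.mulVec xstar := by
      intro k; rw [Matrix.mulVec_sub, dotProduct_sub]
    calc (A.mulVec (xlam ω) - A.mulVec xstar) ⬝ᵥ (A.mulVec (xlam ω) - A.mulVec xstar)
        = (xlam ω - xstar) ⬝ᵥ (Aᵀ*A).mulVec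
            (∑ k, (ψ k ⬝ᵥ W.mulVec (xlam ω - xstar)) • ψ k) := by
          rw [h0, ← hdotAA]
          exact congrArg (fun x => (xlam ω - xstar) ⬝ᵥ (Aᵀ*A).mulVec x) (hcomp (xlam ω - xstar))
      _ = ∑ k, (ψ k ⬝ᵥ W.mulVec (xlam ω - xstar)) *
            (ρ k * ((xlam ω - xstar) ⬝ᵥ W.mulVec (ψ k))) := by
          rw [hmulVec_sum, hdot_sum]
          refine Finset.sum_congr rfl fun k _ => ?_
          rw [Matrix.mulVec_smul, heig k, dotProduct_smul, dotProduct_smul,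
            smul_eq_mul, smul_eq_mul]
      _ = ∑ k, ρ k * (ψ k ⬝ᵥ W.mulVec (xlam ω) - ψ k ⬝ᵥ W.mulVec xstar)^2 := by
          refine Finset.sum_congr rfl fun k _ => ?_
          rw [symm_dot hWt (xlam ω - xstar) (ψ k), hcoef k]
          ring
  -- Parseval for xstar
  have hPar : xstar ⬝ᵥ W.mulVec xstar = ∑ k, (ψ k ⬝ᵥ W.mulVec xstar)^2 := by
    calc xstar ⬝ᵥ W.mulVec xstar
        = xstar ⬝ᵥ W.mulVec (∑ k, (ψ k ⬝ᵥ W.mulVec xstar) • ψ k) :=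
          congrArg (fun x => xstar ⬝ᵥ W.mulVec x) (hcomp xstar)
      _ = ∑ k, (ψ k ⬝ᵥ W.mulVec xstar) * (xstar ⬝ᵥ W.mulVec (ψ k)) := by
          rw [hmulVec_sum, hdot_sum]
          refine Finset.sum_congr rfl fun k _ => ?_
          rw [Matrix.mulVec_smul, dotProduct_smul, smul_eq_mul]
      _ = ∑ k, (ψ k ⬝ᵥ W.mulVec xstar)^2 := by
          refine Finset.sum_congr rfl fun k _ => ?_
          rw [symm_dot hWt xstar (ψ k)]
          ring
  have hPnonneg : 0 ≤ xstar ⬝ᵥ W.mulVec xstar := by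
    rw [hPar]; positivity
  -- noise coefficient facts
  have hεeq : ∀ (k : Fin n) (ω : Ω),
      (A.mulVec (ψ k)) ⬝ᵥ (fun i => e i ω) = ∑ i, A.mulVec (ψ k) i * e i ω := fun k ω => rfl
  have hεL2 : ∀ k : Fin n, MemLp (fun ω => (A.mulVec (ψ k)) ⬝ᵥ (fun i => e i ω)) 2 ℙ := by
    intro k
    simp only [hεeq]
    exact memLp_finset_sum _ (fun i _ => (hL2 i).const_mul _)
  have hε0 : ∀ k : Fin n, ∫ ω, (A.mulVec (ψ k)) ⬝ᵥ (fun i => e i ω) ∂ℙ = 0 := by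
    intro k
    simp only [hεeq]
    rw [integral_finset_sum _ (fun i _ => ((hL2 i).integrable one_le_two).const_mul _)]
    simp [integral_const_mul, hmean]
  have hεsq : ∀ k : Fin n, ∫ ω, ((A.mulVec (ψ k)) ⬝ᵥ (fun i => e i ω))^2 ∂ℙ ≤ σ^2 * ρ k := by
    intro k
    have h := noise_var hindep hL2 hmean hvar (A.mulVec (ψ k))
    have h2 : ∑ i, (A.mulVec (ψ k) i)^2 = ρ k := by
      rw [← hAρ k]
      simp [dotProduct, pow_two]
    rw [h2] at h
    simpa only [hεeq] using h
  have hIsq : ∀ k : Fin n, Integrable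
      (fun ω => ((A.mulVec (ψ k)) ⬝ᵥ (fun i => e i ω) - lam * (ψ k ⬝ᵥ W.mulVec xstar))^2) ℙ := by
    intro k
    exact ((hεL2 k).sub (memLp_const _)).integrable_sq
  have hIvar : ∀ k : Fin n,
      ∫ ω, ((A.mulVec (ψ k)) ⬝ᵥ (fun i => e i ω) - lam * (ψ k ⬝ᵥ W.mulVec xstar))^2 ∂ℙ
        ≤ σ^2 * ρ k + lam^2 * (ψ k ⬝ᵥ W.mulVec xstar)^2 := by
    intro k
    have hint1 : Integrable (fun ω => ((A.mulVec (ψ k)) ⬝ᵥ (fun i => e i ω))^2) ℙ :=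
      (hεL2 k).integrable_sq
    have hint2 : Integrable
        (fun ω => (2*lam*(ψ k ⬝ᵥ W.mulVec xstar)) * ((A.mulVec (ψ k)) ⬝ᵥ (fun i => e i ω))) ℙ :=
      ((hεL2 k).integrable one_le_two).const_mul _
    have hexp : ∀ ω : Ω, ((A.mulVec (ψ k)) ⬝ᵥ (fun i => e i ω) - lam * (ψ k ⬝ᵥ W.mulVec xstar))^2
        = ((A.mulVec (ψ k)) ⬝ᵥ (fun i => e i ω))^2
          - (2*lam*(ψ k ⬝ᵥ W.mulVec xstar)) * ((A.mulVec (ψ k)) ⬝ᵥ (fun i => e i ω))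
          + (lam * (ψ k ⬝ᵥ W.mulVec xstar))^2 := fun ω => by ring
    calc ∫ ω, ((A.mulVec (ψ k)) ⬝ᵥ (fun i => e i ω) - lam * (ψ k ⬝ᵥ W.mulVec xstar))^2 ∂ℙ
        = ∫ ω, (((A.mulVec (ψ k)) ⬝ᵥ (fun i => e i ω))^2
          - (2*lam*(ψ k ⬝ᵥ W.mulVec xstar)) * ((A.mulVec (ψ k)) ⬝ᵥ (fun i => e i ω))
          + (lam * (ψ k ⬝ᵥ W.mulVec xstar))^2) ∂ℙ :=
          integral_congr_ae (Filter.Eventually.of_forall hexp)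
      _ = (∫ ω, ((A.mulVec (ψ k)) ⬝ᵥ (fun i => e i ω))^2 ∂ℙ)
          - (2*lam*(ψ k ⬝ᵥ W.mulVec xstar)) * (∫ ω, (A.mulVec (ψ k)) ⬝ᵥ (fun i => e i ω) ∂ℙ)
          + (lam * (ψ k ⬝ᵥ W.mulVec xstar))^2 := by
          have hintsub : Integrable (fun ω => ((A.mulVec (ψ k)) ⬝ᵥ (fun i => e i ω))^2
              - (2*lam*(ψ k ⬝ᵥ W.mulVec xstar)) * ((A.mulVec (ψ k)) ⬝ᵥ (fun i => e i ω))) ℙ :=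
            hint1.sub hint2
          rw [integral_add hintsub (integrable_const _),
            integral_sub hint1 hint2, integral_const_mul, integral_const]
          simp [measure_univ]
      _ = (∫ ω, ((A.mulVec (ψ k)) ⬝ᵥ (fun i => e i ω))^2 ∂ℙ)
          + lam^2 * (ψ k ⬝ᵥ W.mulVec xstar)^2 := by rw [hε0 k]; ring
      _ ≤ σ^2 * ρ k + lam^2 * (ψ k ⬝ᵥ W.mulVec xstar)^2 := by
          have := hεsq k; linarith
  -- pointwise rewriting of integrand
  have hn0 : (0:ℝ) < n := by exact_mod_cast hn
  have hptwise : ∀ ω : Ω, (1 / (n : ℝ)) *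
      ((A.mulVec (xlam ω) - A.mulVec xstar) ⬝ᵥ (A.mulVec (xlam ω) - A.mulVec xstar))
      = ∑ k, ((1/(n:ℝ)) * ρ k / (ρ k + lam)^2) *
          ((A.mulVec (ψ k)) ⬝ᵥ (fun i => e i ω) - lam * (ψ k ⬝ᵥ W.mulVec xstar))^2 := by
    intro ω
    rw [hpoint ω, Finset.mul_sum]
    refine Finset.sum_congr rfl fun k _ => ?_
    rw [hd ω k, div_pow]
    have hpos := hρlam k
    field_simp
  have hwnonneg : ∀ k : Fin n, 0 ≤ (1/(n:ℝ)) * ρ k / (ρ k + lam)^2 := by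
    intro k
    have := hρ0 k
    positivity
  -- sum bounds
  have hterm1 : ∀ k : Fin n, ρ k^2/(ρ k + lam)^2 ≤ min 1 (C₀ * ((k:ℝ)+1)^(-α)/lam) := by
    intro k
    have h0 := hρ0 k
    have hdk := hdecay k
    have hpos := hρlam k
    refine le_min ?_ ?_
    · rw [div_le_one (by positivity)]
      nlinarith
    · have hstep : ρ k^2/(ρ k + lam)^2 ≤ ρ k/lam := by
        rw [div_le_div_iff₀ (by positivity) hlam]
        nlinarith [mul_nonneg (mul_nonneg h0 h0) h0, mul_nonneg (mul_nonneg h0 h0) hlam.le,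
          mul_nonneg (mul_nonneg h0 hlam.le) hlam.le]
      have hstep2 : ρ k/lam ≤ C₀ * ((k:ℝ)+1)^(-α)/lam := by
        exact (div_le_div_iff_of_pos_right hlam).mpr hdk
      linarith
  have hsum1 : ∑ k : Fin n, ρ k^2/(ρ k + lam)^2 ≤ C₁ * lam^(-(1/α)) := by
    calc ∑ k : Fin n, ρ k^2/(ρ k + lam)^2
        ≤ ∑ k : Fin n, min 1 (C₀ * ((k:ℝ)+1)^(-α)/lam) :=
          Finset.sum_le_sum fun k _ => hterm1 k
      _ = ∑ k ∈ Finset.range n, min 1 (C₀ * ((k:ℝ)+1)^(-α)/lam) :=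
          Fin.sum_univ_eq_sum_range (fun k => min 1 (C₀ * ((k:ℝ)+1)^(-α)/lam)) n
      _ ≤ C₁ * lam^(-(1/α)) := by rw [hC₁def]; exact sum_min_le hC₀ hα n hlam
  have hterm2 : ∀ k : Fin n, lam^2 * ρ k/(ρ k + lam)^2 ≤ lam := by
    intro k
    have h0 := hρ0 k
    have hpos := hρlam k
    rw [div_le_iff₀ (by positivity)]
    nlinarith [mul_nonneg hlam.le (sq_nonneg (ρ k)), mul_nonneg (mul_nonneg hlam.le h0) hlam.le,
      mul_nonneg (mul_nonneg hlam.le hlam.le) hlam.le]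
  -- main calculation
  calc ∫ ω, (1 / (n : ℝ)) *
        ((A.mulVec (xlam ω) - A.mulVec xstar) ⬝ᵥ (A.mulVec (xlam ω) - A.mulVec xstar)) ∂ℙ
      = ∑ k, ((1/(n:ℝ)) * ρ k / (ρ k + lam)^2) *
          ∫ ω, ((A.mulVec (ψ k)) ⬝ᵥ (fun i => e i ω) - lam * (ψ k ⬝ᵥ W.mulVec xstar))^2 ∂ℙ := by
        rw [integral_congr_ae (Filter.Eventually.of_forall hptwise)]
        rw [integral_finset_sum _ (fun k _ => (hIsq k).const_mul _)]
        exact Finset.sum_congr rfl fun k _ => integral_const_mul _ _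
    _ ≤ ∑ k, ((1/(n:ℝ)) * ρ k / (ρ k + lam)^2) *
          (σ^2 * ρ k + lam^2 * (ψ k ⬝ᵥ W.mulVec xstar)^2) :=
        Finset.sum_le_sum fun k _ => mul_le_mul_of_nonneg_left (hIvar k) (hwnonneg k)
    _ = (1/(n:ℝ)) * (σ^2 * ∑ k, ρ k^2/(ρ k + lam)^2
          + ∑ k, (lam^2 * ρ k/(ρ k + lam)^2) * (ψ k ⬝ᵥ W.mulVec xstar)^2) := by
        simp only [mul_add, Finset.mul_sum]
        rw [← Finset.sum_add_distrib]
        refine Finset.sum_congr rfl fun k _ => ?_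
        field_simp
    _ ≤ (1/(n:ℝ)) * (σ^2 * (C₁ * lam^(-(1/α))) + lam * (xstar ⬝ᵥ W.mulVec xstar)) := by
        apply mul_le_mul_of_nonneg_left _ (by positivity)
        have hs2 : ∑ k, (lam^2 * ρ k/(ρ k + lam)^2) * (ψ k ⬝ᵥ W.mulVec xstar)^2
            ≤ lam * (xstar ⬝ᵥ W.mulVec xstar) := by
          rw [hPar, Finset.mul_sum]
          exact Finset.sum_le_sum fun k _ =>
            mul_le_mul_of_nonneg_right (hterm2 k) (sq_nonneg _)
        have hs1 := mul_le_mul_of_nonneg_left hsum1 (sq_nonneg σ)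
        linarith
    _ ≤ CC * lam * ((1 / (n : ℝ)) * (xstar ⬝ᵥ W.mulVec xstar)) +
          CC * σ ^ 2 / ((n : ℝ) * lam ^ (1 / α)) := by
        have hL : 0 < lam ^ (1/α) := Real.rpow_pos_of_pos hlam _
        rw [Real.rpow_neg hlam.le]
        have e1 : (1/(n:ℝ)) * (σ^2 * (C₁ * (lam^(1/α))⁻¹) + lam * (xstar ⬝ᵥ W.mulVec xstar))
            = σ^2 * C₁ / ((n:ℝ) * lam^(1/α)) + lam * ((1/(n:ℝ)) * (xstar ⬝ᵥ W.mulVec xstar)) := by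
          field_simp
        rw [e1]
        have t1 : σ^2 * C₁ / ((n:ℝ) * lam^(1/α)) ≤ CC * σ^2 / ((n:ℝ) * lam^(1/α)) := by
          apply (div_le_div_iff_of_pos_right (by positivity)).mpr
          exact le_trans (mul_le_mul_of_nonneg_left hCCC₁ (sq_nonneg σ)) (le_of_eq (mul_comm _ _))
        have t2 : lam * ((1/(n:ℝ)) * (xstar ⬝ᵥ W.mulVec xstar))
            ≤ CC * lam * ((1/(n:ℝ)) * (xstar ⬝ᵥ W.mulVec xstar)) := by
          have hx : 0 ≤ lam * ((1/(n:ℝ)) * (xstar ⬝ᵥ W.mulVec xstar)) := by positivity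
          rw [mul_assoc]
          exact le_mul_of_one_le_left hx hCC1
        linarith
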